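/- arXiv:2103.11552 — 3 statements merged into one kernel-verified Lean document; each statement's English description precedes it below -/
import Mathlib

section
/- Let a, ã > 0 and D, D̃ ∈ GL⁺(3,ℝ) (real 3×3 matrices with positive determinant). Suppose that a²·(D Dᵗ)⁻¹/det(D⁻¹)^{2/3} = ã²·(D̃ D̃ᵗ)⁻¹/det(D̃⁻¹)^{2/3} and ã³·det(D⁻¹) = a³·det(D̃⁻¹). Then ã = a and there exists A ∈ SO(3) with D̃ = D·A. Conversely, if ã = a and D̃ = D·A for some A ∈ SO(3), then both equations hold. -/
open Matrix

theorem isometric_iff_SO3 (a a' : ℝ) (D D' : Matrix (Fin 3) (Fin 3) ℝ)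
    (ha : 0 < a) (ha' : 0 < a') (hD : 0 < D.det) (hD' : 0 < D'.det) :
    ((a^2 / (D⁻¹).det ^ ((2:ℝ)/3)) • (D * Dᵀ)⁻¹
        = (a'^2 / (D'⁻¹).det ^ ((2:ℝ)/3)) • (D' * D'ᵀ)⁻¹ ∧
      a'^3 * (D⁻¹).det = a^3 * (D'⁻¹).det)
    ↔ (a' = a ∧ ∃ A : Matrix (Fin 3) (Fin 3) ℝ, A * Aᵀ = 1 ∧ A.det = 1 ∧ D' = D * A) := by
  have hDne : D.det ≠ 0 := ne_of_gt hD
  have hD'ne : D'.det ≠ 0 := ne_of_gt hD'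
  have hDu : IsUnit D.det := isUnit_iff_ne_zero.2 hDne
  have hD'u : IsUnit D'.det := isUnit_iff_ne_zero.2 hD'ne
  have hdinv : (D⁻¹).det = D.det⁻¹ := by
    rw [Matrix.det_nonsing_inv, Ring.inverse_eq_inv']
  have hd'inv : (D'⁻¹).det = D'.det⁻¹ := by
    rw [Matrix.det_nonsing_inv, Ring.inverse_eq_inv']
  have hposd : (0:ℝ) < D.det⁻¹ := inv_pos.2 hD
  have hposd' : (0:ℝ) < D'.det⁻¹ := inv_pos.2 hD'
  -- rpow cube identity
  have hcube : ∀ x : ℝ, 0 < x → (x ^ ((2:ℝ)/3))^3 = x^2 := by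
    intro x hx
    rw [← Real.rpow_natCast (x ^ ((2:ℝ)/3)) 3, ← Real.rpow_mul hx.le]
    norm_num
  constructor
  · rintro ⟨h1, h2⟩
    rw [hdinv, hd'inv] at h1 h2
    -- take determinants of h1
    have hdet1 := congrArg Matrix.det h1
    simp only [Matrix.det_smul, Fintype.card_fin, Matrix.det_nonsing_inv,
      Ring.inverse_eq_inv', Matrix.det_mul, Matrix.det_transpose] at hdet1
    have e1 : (a^2 / D.det⁻¹ ^ ((2:ℝ)/3))^3 * (D.det * D.det)⁻¹ = a^6 := by
      rw [div_pow, hcube _ hposd]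
      field_simp
    have e2 : (a'^2 / D'.det⁻¹ ^ ((2:ℝ)/3))^3 * (D'.det * D'.det)⁻¹ = a'^6 := by
      rw [div_pow, hcube _ hposd']
      field_simp
    rw [e1, e2] at hdet1
    have haa : a = a' := (pow_left_strictMonoOn₀ (n := 6) (by norm_num)).injOn ha.le ha'.le hdet1
    have hdd : D.det = D'.det := by
      rw [← haa] at h2
      field_simp at h2
      exact h2.symm
    refine ⟨haa.symm, D⁻¹ * D', ?_, ?_, ?_⟩
    · -- from h1 deduce D*Dᵀ = D'*D'ᵀ
      have hc : a^2 / D.det⁻¹ ^ ((2:ℝ)/3) ≠ 0 := by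
        apply div_ne_zero (pow_ne_zero _ ha.ne')
        exact (Real.rpow_pos_of_pos hposd _).ne'
      rw [← haa, ← hdd] at h1
      have hinv : (D * Dᵀ)⁻¹ = (D' * D'ᵀ)⁻¹ := smul_right_injective _ hc h1
      have hu1 : IsUnit (D * Dᵀ).det := by
        rw [Matrix.det_mul, Matrix.det_transpose]
        exact isUnit_iff_ne_zero.2 (mul_ne_zero hDne hDne)
      have hu2 : IsUnit (D' * D'ᵀ).det := by
        rw [Matrix.det_mul, Matrix.det_transpose]
        exact isUnit_iff_ne_zero.2 (mul_ne_zero hD'ne hD'ne)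
      have hDD : D * Dᵀ = D' * D'ᵀ := by
        have := congrArg Inv.inv hinv
        rwa [Matrix.nonsing_inv_nonsing_inv _ hu1, Matrix.nonsing_inv_nonsing_inv _ hu2] at this
      rw [Matrix.transpose_mul, Matrix.transpose_nonsing_inv]
      calc D⁻¹ * D' * (D'ᵀ * (Dᵀ)⁻¹) = D⁻¹ * (D' * D'ᵀ) * (Dᵀ)⁻¹ := by
              noncomm_ring
        _ = D⁻¹ * (D * Dᵀ) * (Dᵀ)⁻¹ := by rw [hDD]
        _ = (D⁻¹ * D) * (Dᵀ * (Dᵀ)⁻¹) := by noncomm_ring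
        _ = 1 := by
              rw [Matrix.nonsing_inv_mul _ hDu, Matrix.mul_nonsing_inv _ (by
                rwa [Matrix.det_transpose] : IsUnit Dᵀ.det)]
              simp
    · rw [Matrix.det_mul, hdinv, hdd, inv_mul_cancel₀ hD'ne]
    · rw [← Matrix.mul_assoc, Matrix.mul_nonsing_inv _ hDu, Matrix.one_mul]
  · rintro ⟨haa, A, hAO, hAdet, hDA⟩
    have hdd : D'.det = D.det := by rw [hDA, Matrix.det_mul, hAdet, mul_one]
    have hDD : D' * D'ᵀ = D * Dᵀ := by
      rw [hDA, Matrix.transpose_mul]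
      calc D * A * (Aᵀ * Dᵀ) = D * (A * Aᵀ) * Dᵀ := by noncomm_ring
        _ = D * Dᵀ := by rw [hAO, Matrix.mul_one]
    constructor
    · rw [haa, hdinv, hd'inv, hdd, hDD]
    · rw [haa, hdinv, hd'inv, hdd]
end

section
/- Fix c ∈ ℝ, h2 ∈ (0,1) and hk ∈ ℝ. Let m2(t) = h2/√((1−h2²)e^{2ct}+h2²) and mk(t) = hk·e^{ct}/√((1−h2²)e^{2ct}+h2²). Then mk solves the ODE mk'(t) = c·mk(t)·m2(t)² with mk(0) = hk. -/
theorem mk_solves_ode (c h2 hk : ℝ) (h0 : 0 < h2) (h1 : h2 < 1) :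
    let m2 : ℝ → ℝ := fun t => h2 / Real.sqrt ((1 - h2^2) * Real.exp (2*c*t) + h2^2)
    let mk : ℝ → ℝ := fun t => hk * Real.exp (c*t) / Real.sqrt ((1 - h2^2) * Real.exp (2*c*t) + h2^2)
    mk 0 = hk ∧ ∀ t : ℝ, HasDerivAt mk (c * mk t * (m2 t)^2) t := by
  intro m2 mk
  have hD : ∀ t : ℝ, 0 < (1 - h2^2) * Real.exp (2*c*t) + h2^2 := fun t =>
    add_pos (mul_pos (by nlinarith) (Real.exp_pos _)) (by positivity)
  constructor
  · show hk * Real.exp (c*0) / Real.sqrt ((1 - h2^2) * Real.exp (2*c*0) + h2^2) = hk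
    norm_num
  · intro t
    have hDpos := hD t
    have hsqpos : 0 < Real.sqrt ((1 - h2^2) * Real.exp (2*c*t) + h2^2) := Real.sqrt_pos.2 hDpos
    have hsq : Real.sqrt ((1 - h2^2) * Real.exp (2*c*t) + h2^2) ^ 2
        = (1 - h2^2) * Real.exp (2*c*t) + h2^2 := Real.sq_sqrt hDpos.le
    have hDt : HasDerivAt (fun s : ℝ => (1 - h2^2) * Real.exp (2*c*s) + h2^2)
        (((Real.exp (2*c*t)) * (2*c)) * (1 - h2^2)) t := by
      have h1' : HasDerivAt (fun s : ℝ => 2*c*s) (2*c) t := by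
        simpa using (hasDerivAt_id t).const_mul (2*c)
      have := (h1'.exp.const_mul (1 - h2^2)).add_const (h2^2)
      exact this.congr_deriv (by ring)
    have hsqrt : HasDerivAt (fun s : ℝ => Real.sqrt ((1 - h2^2) * Real.exp (2*c*s) + h2^2))
        ((((Real.exp (2*c*t)) * (2*c)) * (1 - h2^2)) /
          (2 * Real.sqrt ((1 - h2^2) * Real.exp (2*c*t) + h2^2))) t :=
      hDt.sqrt hDpos.ne'
    have hnum : HasDerivAt (fun s : ℝ => hk * Real.exp (c*s)) (hk * (Real.exp (c*t) * c)) t := by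
      have h1' : HasDerivAt (fun s : ℝ => c*s) c t := by
        simpa using (hasDerivAt_id t).const_mul c
      exact h1'.exp.const_mul hk
    have hdiv := hnum.div hsqrt hsqpos.ne'
    refine hdiv.congr_deriv (Eq.symm ?_)
    show c * (hk * Real.exp (c*t) / Real.sqrt ((1 - h2^2) * Real.exp (2*c*t) + h2^2)) *
        (h2 / Real.sqrt ((1 - h2^2) * Real.exp (2*c*t) + h2^2))^2 = _
    have hE2 : Real.exp (2*c*t) = Real.exp (c*t) ^ 2 := by
      rw [sq, ← Real.exp_add]; ring_nf
    set S := Real.sqrt ((1 - h2^2) * Real.exp (2*c*t) + h2^2) with hS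
    set E := Real.exp (c*t) with hE
    field_simp
    rw [show c*2*t = 2*c*t by ring, hE2]
    rw [hE2] at hsq
    linear_combination (-(c*hk*E)) * hsq
end

section
/- Fix c ∈ ℝ and let Ψ : ℝ⁴ → ℝ⁴ be given by Ψ(m) = c·m2·(m0m2, m1m2, −m0²−m1²−m3², m3m2) for m = (m0,m1,m2,m3). Then for every initial value h ∈ S³ the ODE m'(t) = Ψ(m(t)), m(0) = h, has a unique solution defined on all of ℝ, and this solution satisfies |m(t)| = 1 for all t. Moreover, if h2 = 0 the solution is constant, and if h = (0,0,±1,0) the solution is constant. -/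
noncomputable def Psi (c : ℝ) (m : Fin 4 → ℝ) : Fin 4 → ℝ :=
  (c * m 2) •
    ![m 0 * m 2, m 1 * m 2, -(m 0)^2 - (m 1)^2 - (m 3)^2, m 3 * m 2]

open Set

lemma Psi0 (c : ℝ) (m : Fin 4 → ℝ) : Psi c m 0 = c * m 2 * (m 0 * m 2) := by
  simp [Psi]

lemma Psi1 (c : ℝ) (m : Fin 4 → ℝ) : Psi c m 1 = c * m 2 * (m 1 * m 2) := by
  simp [Psi]

lemma Psi2 (c : ℝ) (m : Fin 4 → ℝ) :
    Psi c m 2 = c * m 2 * (-(m 0)^2 - (m 1)^2 - (m 3)^2) := by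
  simp [Psi]

lemma Psi3 (c : ℝ) (m : Fin 4 → ℝ) : Psi c m 3 = c * m 2 * (m 3 * m 2) := by
  simp [Psi]

lemma hasDerivAt_pi4 {m : ℝ → Fin 4 → ℝ} {d : Fin 4 → ℝ} {t : ℝ}
    (h0 : HasDerivAt (fun t => m t 0) (d 0) t)
    (h1 : HasDerivAt (fun t => m t 1) (d 1) t)
    (h2 : HasDerivAt (fun t => m t 2) (d 2) t)
    (h3 : HasDerivAt (fun t => m t 3) (d 3) t) :
    HasDerivAt m d t := by
  rw [hasDerivAt_pi]
  intro i
  fin_cases i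
  exacts [h0, h1, h2, h3]

lemma norm_conserved (c : ℝ) (m : ℝ → Fin 4 → ℝ)
    (hm : ∀ t, HasDerivAt m (Psi c (m t)) t) (t : ℝ) :
    (m t 0)^2 + (m t 1)^2 + (m t 2)^2 + (m t 3)^2
      = (m 0 0)^2 + (m 0 1)^2 + (m 0 2)^2 + (m 0 3)^2 := by
  set N : ℝ → ℝ := fun s => (m s 0)^2 + (m s 1)^2 + (m s 2)^2 + (m s 3)^2 with hN
  have key : ∀ s : ℝ, HasDerivAt N 0 s := by
    intro s
    have hcomp := hasDerivAt_pi.1 (hm s)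
    have h0 := (hcomp 0).pow 2
    have h1 := (hcomp 1).pow 2
    have h2 := (hcomp 2).pow 2
    have h3 := (hcomp 3).pow 2
    have := ((h0.add h1).add h2).add h3
    refine this.congr_deriv ?_
    simp only [Psi0, Psi1, Psi2, Psi3, Nat.cast_ofNat, pow_one]
    ring
  have := is_const_of_deriv_eq_zero (f := N)
    (fun x => (key x).differentiableAt) (fun x => (key x).deriv) t 0
  exact this

lemma contDiff_Psi (c : ℝ) : ContDiff ℝ 1 (Psi c) := by
  rw [contDiff_pi]
  intro i
  have hp : ∀ j : Fin 4, ContDiff ℝ 1 (fun m : Fin 4 → ℝ => m j) :=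
    fun j => (ContinuousLinearMap.proj j : (Fin 4 → ℝ) →L[ℝ] ℝ).contDiff
  fin_cases i <;> simp only [Psi0, Psi1, Psi2, Psi3] <;>
    first
    | exact ((contDiff_const.mul (hp 2)).mul ((hp 0).mul (hp 2)))
    | exact ((contDiff_const.mul (hp 2)).mul ((hp 1).mul (hp 2)))
    | exact ((contDiff_const.mul (hp 2)).mul ((hp 3).mul (hp 2)))
    | exact ((contDiff_const.mul (hp 2)).mul
        ((((hp 0).pow 2).neg.sub ((hp 1).pow 2)).sub ((hp 3).pow 2)))

lemma psi_lip (c : ℝ) :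
    ∃ K : NNReal, LipschitzOnWith K (Psi c) (Metric.closedBall (0 : Fin 4 → ℝ) 2) := by
  have hcd := contDiff_Psi c
  have hdiff : Differentiable ℝ (Psi c) := hcd.differentiable one_ne_zero
  have hfc : Continuous fun x => fderiv ℝ (Psi c) x := hcd.continuous_fderiv one_ne_zero
  obtain ⟨C, hC⟩ := (isCompact_closedBall (0 : Fin 4 → ℝ) 2).exists_bound_of_continuousOn
    hfc.continuousOn
  refine ⟨⟨max C 0, le_max_right _ _⟩,
    (convex_closedBall _ _).lipschitzOnWith_of_nnnorm_fderiv_le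
      (fun x _ => hdiff x) (fun x hx => ?_)⟩
  have h1 := hC x hx
  change ‖fderiv ℝ (Psi c) x‖ ≤ max C 0
  exact le_trans h1 (le_max_left _ _)

lemma mem_ball_of_solution (c : ℝ) {h : Fin 4 → ℝ}
    (hn : (h 0)^2 + (h 1)^2 + (h 2)^2 + (h 3)^2 = 1)
    {f : ℝ → Fin 4 → ℝ} (hf0 : f 0 = h)
    (hf' : ∀ t, HasDerivAt f (Psi c (f t)) t) (s : ℝ) :
    f s ∈ Metric.closedBall (0 : Fin 4 → ℝ) 2 := by
  have hcons := norm_conserved c f hf' s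
  rw [hf0, hn] at hcons
  rw [Metric.mem_closedBall, dist_zero_right]
  rw [pi_norm_le_iff_of_nonneg (by norm_num)]
  intro i
  rw [Real.norm_eq_abs]
  have habs : ∀ x : ℝ, x^2 ≤ 1 → |x| ≤ 2 := by
    intro x hx
    have := (sq_le_one_iff_abs_le_one x).1 hx
    linarith
  fin_cases i
  · exact habs (f s 0) (by nlinarith [sq_nonneg (f s 1), sq_nonneg (f s 2), sq_nonneg (f s 3)])
  · exact habs (f s 1) (by nlinarith [sq_nonneg (f s 0), sq_nonneg (f s 2), sq_nonneg (f s 3)])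
  · exact habs (f s 2) (by nlinarith [sq_nonneg (f s 0), sq_nonneg (f s 1), sq_nonneg (f s 3)])
  · exact habs (f s 3) (by nlinarith [sq_nonneg (f s 0), sq_nonneg (f s 1), sq_nonneg (f s 2)])

lemma uniq (c : ℝ) {h : Fin 4 → ℝ}
    (hn : (h 0)^2 + (h 1)^2 + (h 2)^2 + (h 3)^2 = 1)
    {f g : ℝ → Fin 4 → ℝ} (hf0 : f 0 = h)
    (hf' : ∀ t, HasDerivAt f (Psi c (f t)) t)
    (hg0 : g 0 = h)
    (hg' : ∀ t, HasDerivAt g (Psi c (g t)) t) : f = g := by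
  obtain ⟨K, hK⟩ := psi_lip c
  funext t
  have habs := abs_nonneg t
  have h1 := le_abs_self t
  have h2 := neg_abs_le t
  refine ODE_solution_unique_of_mem_Icc (v := fun _ => Psi c)
    (s := fun _ => Metric.closedBall (0 : Fin 4 → ℝ) 2) (K := K)
    (a := -|t| - 1) (b := |t| + 1) (t₀ := 0)
    (fun _ _ => hK) (by constructor <;> linarith)
    (fun x _ => (hf' x).continuousAt.continuousWithinAt)
    (fun x _ => hf' x)
    (fun x _ => mem_ball_of_solution c hn hf0 hf' x)
    (fun x _ => (hg' x).continuousAt.continuousWithinAt)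
    (fun x _ => hg' x)
    (fun x _ => mem_ball_of_solution c hn hg0 hg' x)
    (hf0.trans hg0.symm) ⟨by linarith, by linarith⟩

lemma exists_sol (c : ℝ) (h : Fin 4 → ℝ)
    (hn : (h 0)^2 + (h 1)^2 + (h 2)^2 + (h 3)^2 = 1) :
    ∃ m : ℝ → Fin 4 → ℝ, m 0 = h ∧ ∀ t, HasDerivAt m (Psi c (m t)) t := by
  have hb : (h 0)^2 + (h 1)^2 + (h 3)^2 = 1 - (h 2)^2 := by linarith
  set a : ℝ := (h 2)^2 with ha
  set w : ℝ → ℝ := fun t => a * Real.exp (-(2*c*t)) + (1-a) with hwdef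
  have ha0 : 0 ≤ a := sq_nonneg _
  have ha1 : a ≤ 1 := by
    nlinarith [sq_nonneg (h 0), sq_nonneg (h 1), sq_nonneg (h 3)]
  have hw_pos : ∀ t, 0 < w t := by
    intro t
    have he := Real.exp_pos (-(2*c*t))
    rcases eq_or_lt_of_le ha0 with heq | hlt
    · simp only [hwdef, ← heq]; linarith
    · have : 0 < a * Real.exp (-(2*c*t)) := by positivity
      simp only [hwdef]; linarith
  set f : ℝ → ℝ := fun t => (w t) ^ (-(1/2) : ℝ) with hfdef
  have hf_pos : ∀ t, 0 < f t := fun t => Real.rpow_pos_of_pos (hw_pos t) _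
  have hw' : ∀ t, HasDerivAt w (a * Real.exp (-(2*c*t)) * (-(2*c))) t := by
    intro t
    have h1 : HasDerivAt (fun t : ℝ => -(2*c*t)) (-(2*c)) t := by
      have := ((hasDerivAt_id t).const_mul (2*c)).fun_neg
      simpa using this
    have := (h1.exp.const_mul a).add_const (1-a)
    refine this.congr_deriv ?_
    ring
  have hcube : ∀ t, (w t) ^ (-(3/2) : ℝ) = (f t)^3 := by
    intro t
    rw [hfdef]
    rw [← Real.rpow_natCast ((w t) ^ (-(1/2) : ℝ)) 3, ← Real.rpow_mul (hw_pos t).le]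
    norm_num
  have hf' : ∀ t, HasDerivAt f (c * a * Real.exp (-(2*c*t)) * (f t)^3) t := by
    intro t
    have := (hw' t).rpow_const (p := (-(1/2) : ℝ)) (Or.inl (hw_pos t).ne')
    convert this using 1
    rw [show (-(1/2) : ℝ) - 1 = -(3/2) by norm_num, hcube t]
    ring
  have hfw : ∀ t, (f t)^3 * (a * Real.exp (-(2*c*t)) + (1-a)) = f t := by
    intro t
    have h1 : (w t) ^ ((-(3/2) : ℝ) + 1) = (w t) ^ (-(3/2):ℝ) * w t := by
      rw [Real.rpow_add (hw_pos t), Real.rpow_one]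
    have h2 : ((-(3/2):ℝ) + 1) = (-(1/2) : ℝ) := by norm_num
    have h3 : (w t) ^ (-(1/2) : ℝ) = (w t)^(-(3/2):ℝ) * w t := by rw [← h2, h1]
    calc (f t)^3 * (a * Real.exp (-(2*c*t)) + (1-a))
        = (w t)^(-(3/2):ℝ) * w t := by rw [hcube t]
      _ = f t := h3.symm
  refine ⟨fun t => ![h 0 * f t, h 1 * f t, h 2 * Real.exp (-(c*t)) * f t, h 3 * f t], ?_, ?_⟩
  · have hf0 : f 0 = 1 := by
      have hw0 : w 0 = 1 := by simp [hwdef]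
      rw [hfdef]; simp only [hw0, Real.one_rpow]
    funext i
    fin_cases i <;> simp [hf0]
  · intro t
    have hE2 : Real.exp (-(2*c*t)) = Real.exp (-(c*t)) * Real.exp (-(c*t)) := by
      rw [← Real.exp_add]; ring_nf
    have hEd : HasDerivAt (fun t : ℝ => Real.exp (-(c*t))) (Real.exp (-(c*t)) * (-c)) t := by
      have h1 : HasDerivAt (fun t : ℝ => -(c*t)) (-c) t := by
        have := ((hasDerivAt_id t).const_mul c).fun_neg
        simpa using this
      simpa using h1.exp
    refine hasDerivAt_pi4 ?_ ?_ ?_ ?_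
    · simp only [Psi0]
      simp
      have := (hf' t).const_mul (h 0)
      refine this.congr_deriv ?_
      rw [hE2]; ring
    · simp only [Psi1]
      simp
      have := (hf' t).const_mul (h 1)
      refine this.congr_deriv ?_
      rw [hE2]; ring
    · simp only [Psi2]
      simp
      have hprod := (hEd.const_mul (h 2)).mul (hf' t)
      refine hprod.congr_deriv ?_
      have hfw' := hfw t
      rw [hE2] at hfw' ⊢
      linear_combination (c * h 2 * Real.exp (-(c*t))) * hfw' +
        (c * h 2 * Real.exp (-(c*t)) * (f t)^3) * hb
    · simp only [Psi3]
      simp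
      have := (hf' t).const_mul (h 3)
      refine this.congr_deriv ?_
      rw [hE2]; ring

theorem flow_global_existence_uniqueness (c : ℝ) :
    ∀ h : Fin 4 → ℝ, (h 0)^2 + (h 1)^2 + (h 2)^2 + (h 3)^2 = 1 →
      (∃! m : ℝ → (Fin 4 → ℝ),
        m 0 = h ∧ ∀ t : ℝ, HasDerivAt m (Psi c (m t)) t) ∧
      ∀ m : ℝ → (Fin 4 → ℝ),
        (m 0 = h ∧ ∀ t : ℝ, HasDerivAt m (Psi c (m t)) t) →
          ((∀ t : ℝ, (m t 0)^2 + (m t 1)^2 + (m t 2)^2 + (m t 3)^2 = 1) ∧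
           (h 2 = 0 → ∀ t : ℝ, m t = h) ∧
           ((h = ![0, 0, 1, 0] ∨ h = ![0, 0, -1, 0]) → ∀ t : ℝ, m t = h)) := by
  intro h hn
  obtain ⟨ms, hms0, hms'⟩ := exists_sol c h hn
  constructor
  · exact ⟨ms, ⟨hms0, hms'⟩, fun g hg => uniq c hn hg.1 hg.2 hms0 hms'⟩
  · intro m hm
    have hconst_sol : Psi c h = 0 → m = fun _ => h := by
      intro hP
      refine uniq c hn hm.1 hm.2 rfl fun t => ?_
      simpa [hP] using hasDerivAt_const (𝕜 := ℝ) t h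
    refine ⟨fun t => ?_, ?_, ?_⟩
    · have := norm_conserved c m hm.2 t
      rw [hm.1, hn] at this
      exact this
    · intro hh2 t
      have hP : Psi c h = 0 := by
        rw [Psi, hh2, mul_zero, zero_smul]
      rw [hconst_sol hP]
    · intro hcases t
      have hP : Psi c h = 0 := by
        rcases hcases with rfl | rfl <;>
          · funext i
            fin_cases i <;> simp [Psi]
      rw [hconst_sol hP]
end
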